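/- (Lower bounds on the accelerated coefficients A_r.) Consider the sequences A_r, B_r, a_r defined by the accelerated recursion with parameters λ > 0 and μ ≥ 0. If μ ≤ 4λ, then A_r ≥ r²/(4λ) for all r ≥ 0; moreover, if additionally μ > 0, then for all r ≥ 0, A_r ≥ (1/(4μ))·[(1 + √(μ/(4λ)))^r − (1 − √(μ/(4λ)))^r]² ≥ r²/(4λ). If μ > 4λ, then for all r ≥ 1, A_r ≥ (1/(4λ))·(1 + √(μ/(4λ)))^{2(r−1)}. -/

import Mathlib

private lemma le_of_sq_le (a b : ℝ) (ha : 0 ≤ a) (hb : 0 ≤ b) (h : a^2 ≤ b^2) : a ≤ b := by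
  nlinarith

private lemma one_le_sqrt' (x : ℝ) (h : 1 ≤ x) : 1 ≤ Real.sqrt x := by
  rw [show (1:ℝ) = Real.sqrt 1 from (Real.sqrt_one).symm]
  exact Real.sqrt_le_sqrt (by simpa [Real.sqrt_one] using h)

private lemma invariant_step (q b γ β α m : ℝ)
    (hq0 : 0 ≤ q) (hg0 : 0 ≤ γ) (hB0 : 0 ≤ β) (hap : 0 < α) (hb1 : 1 ≤ b)
    (hbg : b^2 = 1 + γ^2) (hba : β^2 = b^2 + m) (hag : α^2 = γ^2 + m)
    (hab : 2*q*(α*b) ≤ m) :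
    γ + q*b ≤ α ∧ b + q*γ ≤ β := by
  have hb0 : (0:ℝ) ≤ b := by linarith
  have hgab : γ^2 + 2*q*(α*b) ≤ α^2 := by linarith
  have h2qb : 2*q*b ≤ α := by
    nlinarith [sq_nonneg γ, mul_nonneg (mul_nonneg hq0 hb0) hap.le]
  have h1 : γ + q*b ≤ α := by
    nlinarith [sq_nonneg (q*b), mul_nonneg hq0 hb0]
  refine ⟨h1, ?_⟩
  have h6 : 2*q*b*(γ + q*b) ≤ 2*q*b*α := by
    apply mul_le_mul_of_nonneg_left h1 (by positivity)
  have h7 : (b + q*γ)^2 ≤ β^2 := by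
    nlinarith [sq_nonneg q, mul_nonneg (sq_nonneg q) (sq_nonneg b)]
  exact le_of_sq_le _ _ (by positivity) hB0 h7

set_option maxHeartbeats 1000000 in
theorem stmt_13 (lam μ : ℝ) (hlam : 0 < lam) (hμ : 0 ≤ μ)
    (A a : ℕ → ℝ) (hA0 : A 0 = 0)
    (harec : ∀ r, a (r + 1)
      = ((1 + μ * A r)
          + Real.sqrt ((1 + μ * A r) ^ 2 + 4 * lam * A r * (1 + μ * A r)))
        / (2 * lam))
    (hArec : ∀ r, A (r + 1) = A r + a (r + 1)) :
    (μ ≤ 4 * lam →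
      (∀ r : ℕ, (r : ℝ) ^ 2 / (4 * lam) ≤ A r) ∧
      (0 < μ → ∀ r : ℕ,
        (1 / (4 * μ)) * ((1 + Real.sqrt (μ / (4 * lam))) ^ r
            - (1 - Real.sqrt (μ / (4 * lam))) ^ r) ^ 2 ≤ A r ∧
        (r : ℝ) ^ 2 / (4 * lam)
          ≤ (1 / (4 * μ)) * ((1 + Real.sqrt (μ / (4 * lam))) ^ r
              - (1 - Real.sqrt (μ / (4 * lam))) ^ r) ^ 2)) ∧
    (4 * lam < μ → ∀ r : ℕ, 1 ≤ r →
      (1 / (4 * lam)) * (1 + Real.sqrt (μ / (4 * lam))) ^ (2 * (r - 1)) ≤ A r) := by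
  set q := Real.sqrt (μ / (4 * lam)) with hqdef
  have hq0 : 0 ≤ q := Real.sqrt_nonneg _
  have hq2 : q ^ 2 = μ / (4 * lam) := Real.sq_sqrt (by positivity)
  set L := Real.sqrt lam with hLdef
  have hL : 0 < L := Real.sqrt_pos.mpr hlam
  have hL2 : L ^ 2 = lam := Real.sq_sqrt hlam.le
  -- step: positivity and increase
  have hstep : ∀ r, 0 ≤ A r → A r + 1 / (2 * lam) ≤ A (r + 1) := by
    intro r h0
    have hs := Real.sqrt_nonneg ((1 + μ * A r) ^ 2 + 4 * lam * A r * (1 + μ * A r))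
    rw [hArec r, harec r]
    have hBs : (1:ℝ) ≤ (1 + μ * A r) + Real.sqrt ((1 + μ * A r) ^ 2 + 4 * lam * A r * (1 + μ * A r)) := by
      nlinarith
    have h2 : 1 / (2 * lam) ≤ ((1 + μ * A r) + Real.sqrt ((1 + μ * A r) ^ 2 + 4 * lam * A r * (1 + μ * A r))) / (2 * lam) :=
      div_le_div_of_nonneg_right hBs (by positivity)
    linarith
  have hA0' : ∀ r, 0 ≤ A r := by
    intro r
    induction r with
    | zero => rw [hA0]
    | succ n ih => have := hstep n ih; have : 0 < 1/(2*lam) := by positivity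
                   linarith [hstep n ih]
  have hmono : ∀ r, A r + 1/(2*lam) ≤ A (r+1) := fun r => hstep r (hA0' r)
  have hApos : ∀ r, 0 < A (r+1) := by
    intro r; have := hmono r; have h2 : 0 < 1/(2*lam) := by positivity
    have := hA0' r; linarith
  have hkey : ∀ r, lam * (A (r+1) - A r)^2 = A (r+1) * (1 + μ * A r) := by
    intro r
    have h0 := hA0' r
    have hB : (0:ℝ) ≤ 1 + μ * A r := by nlinarith
    have hD : (0:ℝ) ≤ (1 + μ * A r) ^ 2 + 4 * lam * A r * (1 + μ * A r) := by
      nlinarith [sq_nonneg (1 + μ * A r), mul_nonneg (mul_nonneg (by linarith : (0:ℝ) ≤ 4 * lam) h0) hB]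
    set sD := Real.sqrt ((1 + μ * A r) ^ 2 + 4 * lam * A r * (1 + μ * A r)) with hsDdef
    have hs : sD ^ 2 = (1 + μ * A r) ^ 2 + 4 * lam * A r * (1 + μ * A r) := Real.sq_sqrt hD
    rw [hArec r, harec r, ← hsDdef]
    field_simp
    linear_combination hs
  have hAmono : ∀ r, A r ≤ A (r+1) := by
    intro r; have h1 := hmono r; have h2 : (0:ℝ) < 1/(2*lam) := by positivity
    linarith
  -- sqrt facts
  have hsq : ∀ r, Real.sqrt (A r) ^ 2 = A r := fun r => Real.sq_sqrt (hA0' r)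
  have hsmono : ∀ r, Real.sqrt (A r) ≤ Real.sqrt (A (r+1)) :=
    fun r => Real.sqrt_le_sqrt (hAmono r)
  have hxpos : ∀ r, 0 < Real.sqrt (A (r+1)) := fun r => Real.sqrt_pos.mpr (hApos r)
  have hstep1 : ∀ r, Real.sqrt (A r) + 1/(2*L) ≤ Real.sqrt (A (r+1)) := by
    intro r
    set s := Real.sqrt (A r)
    set x := Real.sqrt (A (r+1))
    have hs2 := hsq r
    have hx2 := hsq (r+1)
    have hxp := hxpos r
    have hsx := hsmono r
    have hs0 : 0 ≤ s := Real.sqrt_nonneg _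
    have hk := hkey r
    have h1e : (L*(x-s)*(x+s))^2 = A (r+1) * (1 + μ * A r) := by
      linear_combination (x^2-s^2)^2 * hL2 + lam*(x^2 - s^2 + A (r+1) - A r) * hx2
        - lam*(x^2 - s^2 + A (r+1) - A r) * hs2 + hk
    have h1 : x^2 ≤ (L*(x-s)*(x+s))^2 := by
      linarith [h1e, hx2, mul_nonneg (mul_nonneg hμ (hA0' r)) (hApos r).le]
    have h2 : x ≤ L*(x-s)*(x+s) := by
      apply le_of_sq_le _ _ hxp.le _ h1
      have : 0 ≤ x - s := by linarith
      positivity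
    have h3 : 1 ≤ 2*L*(x-s) := by
      nlinarith [h2, hxp, mul_nonneg hL.le (sq_nonneg (x-s))]
    have h4 : 1/(2*L) ≤ x - s := by
      rw [div_le_iff₀ (by positivity)]; linarith
    linarith
  have hstep2 : ∀ r, (1+q) * Real.sqrt (A r) ≤ Real.sqrt (A (r+1)) := by
    intro r
    set s := Real.sqrt (A r)
    set x := Real.sqrt (A (r+1))
    have hs2 := hsq r
    have hx2 := hsq (r+1)
    have hxp := hxpos r
    have hsx := hsmono r
    have hs0 : 0 ≤ s := Real.sqrt_nonneg _
    have hk := hkey r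
    -- lam*(x^2-s^2)^2 = x^2*(1+ μ s^2) ≥ μ s^2 x^2 = (2 q L s x)^2
    have h1e : (L*(x-s)*(x+s))^2 = A (r+1) * (1 + μ * A r) := by
      linear_combination (x^2-s^2)^2 * hL2 + lam*(x^2 - s^2 + A (r+1) - A r) * hx2
        - lam*(x^2 - s^2 + A (r+1) - A r) * hs2 + hk
    have hq2' : 4*lam*q^2 = μ := by rw [hq2]; field_simp
    have h1e2 : (2*q*L*(s*x))^2 = μ * A r * A (r+1) := by
      linear_combination 4*q^2*s^2*x^2*hL2 + s^2*x^2*hq2' + μ*x^2*hs2 + μ*(A r)*hx2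
    have h1 : (2*q*L*(s*x))^2 ≤ (L*(x-s)*(x+s))^2 := by
      linarith [h1e, h1e2, hApos r]
    have h2 : 2*q*L*(s*x) ≤ L*(x-s)*(x+s) := by
      apply le_of_sq_le _ _ (by positivity) _ h1
      have : 0 ≤ x - s := by linarith
      positivity
    have h3 : 2*q*L*(s*x) ≤ L*(x-s)*(2*x) := by
      linarith [h2, mul_nonneg (mul_nonneg hL.le (sub_nonneg.mpr hsx)) (sub_nonneg.mpr hsx)]
    have h4 : q*s ≤ x - s := by
      nlinarith [h3, mul_pos hL hxp, hxp, hs0]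
    linarith [h4]
  -- Part 1 : A r ≥ r^2/(4 lam)
  have hP1' : ∀ r : ℕ, (r:ℝ)/(2*L) ≤ Real.sqrt (A r) := by
    intro r
    induction r with
    | zero => simp
    | succ n ih =>
      have := hstep1 n
      push_cast
      have : ((n:ℝ)+1)/(2*L) = (n:ℝ)/(2*L) + 1/(2*L) := by ring
      rw [this]
      linarith [hstep1 n]
  have hP1 : ∀ r : ℕ, (r:ℝ)^2/(4*lam) ≤ A r := by
    intro r
    have h1 := hP1' r
    have h2 : ((r:ℝ)/(2*L))^2 ≤ Real.sqrt (A r) ^2 := by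
      apply pow_le_pow_left₀ (by positivity) h1
    have h3 : ((r:ℝ)/(2*L))^2 = (r:ℝ)^2/(4*lam) := by
      rw [div_pow]
      congr 1
      linear_combination 4 * hL2
    rw [hsq r] at h2
    linarith [h2, h3.symm.le]
  -- Part 3 : geometric growth
  have hA1 : A 1 = 1/lam := by
    have h := hArec 0
    rw [harec 0, hA0] at h
    norm_num [Real.sqrt_one] at h
    rw [h]; field_simp
  have hP3' : ∀ k : ℕ, (1+q)^k / L ≤ Real.sqrt (A (k+1)) := by
    intro k
    induction k with
    | zero =>
      simp only [pow_zero]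
      rw [hA1, one_div, one_div, Real.sqrt_inv]
    | succ n ih =>
      have h1 := hstep2 (n+1)
      have h2 : (1+q)^(n+1)/L = (1+q) * ((1+q)^n / L) := by ring
      rw [h2]
      calc (1+q) * ((1+q)^n / L) ≤ (1+q) * Real.sqrt (A (n+1)) := by
            apply mul_le_mul_of_nonneg_left ih (by linarith)
        _ ≤ Real.sqrt (A (n+1+1)) := hstep2 (n+1)
  have hP3 : ∀ r : ℕ, 1 ≤ r → (1/(4*lam)) * (1+q)^(2*(r-1)) ≤ A r := by
    intro r hr
    obtain ⟨k, rfl⟩ : ∃ k, r = k + 1 := ⟨r - 1, (Nat.succ_pred_eq_of_pos hr).symm⟩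
    simp only [Nat.add_sub_cancel]
    have h1 := hP3' k
    have h2 : ((1+q)^k/L)^2 ≤ Real.sqrt (A (k+1)) ^ 2 := by
      apply pow_le_pow_left₀ (by positivity) h1
    rw [hsq (k+1)] at h2
    have h3 : ((1+q)^k/L)^2 = (1+q)^(2*k)/lam := by
      rw [div_pow, ← pow_mul, Nat.mul_comm k 2, hL2]
    have h4 : 0 ≤ (1+q)^(2*k) := by positivity
    have h5 : (1/(4*lam)) * (1+q)^(2*k) ≤ (1+q)^(2*k)/lam := by
      have e : (1+q)^(2*k)/lam - (1/(4*lam))*(1+q)^(2*k) = (3*(1+q)^(2*k))/(4*lam) := by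
        field_simp; ring
      have hnn : (0:ℝ) ≤ (3*(1+q)^(2*k))/(4*lam) := by positivity
      linarith [e, hnn]
    linarith [h3 ▸ h2]
  have hq4 : 4*lam*q^2 = μ := by rw [hq2]; field_simp
  -- Part 2 invariant
  have main2 : 0 < μ → ∀ r : ℕ,
      ((1+q)^r + (1-q)^r)/2 ≤ Real.sqrt (1 + μ * A r) ∧
      ((1+q)^r - (1-q)^r)/2 ≤ Real.sqrt (μ * A r) := by
    intro hμp r
    induction r with
    | zero =>
      rw [hA0]
      norm_num [Real.sqrt_one]
    | succ n ih =>
      obtain ⟨ih1, ih2⟩ := ih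
      set u := (1+q)^n with hu
      set v := (1-q)^n with hv
      set b := Real.sqrt (1 + μ * A n) with hbdef
      set γ := Real.sqrt (μ * A n) with hgdef
      set β := Real.sqrt (1 + μ * A (n+1)) with hBdef
      set α := Real.sqrt (μ * A (n+1)) with hadef
      have hb2 : b^2 = 1 + μ * A n := Real.sq_sqrt (by nlinarith [hA0' n, mul_nonneg hμ (hA0' n)])
      have hg2 : γ^2 = μ * A n := Real.sq_sqrt (mul_nonneg hμ (hA0' n))
      have hB2 : β^2 = 1 + μ * A (n+1) := Real.sq_sqrt (by nlinarith [mul_nonneg hμ (hA0' (n+1))])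
      have ha2 : α^2 = μ * A (n+1) := Real.sq_sqrt (mul_nonneg hμ (hA0' (n+1)))
      have hb0 : 0 ≤ b := Real.sqrt_nonneg _
      have hg0 : 0 ≤ γ := Real.sqrt_nonneg _
      have hB0 : 0 ≤ β := Real.sqrt_nonneg _
      have hap : 0 < α := Real.sqrt_pos.mpr (mul_pos hμp (hApos n))
      have hb1 : 1 ≤ b := one_le_sqrt' _ (by nlinarith [mul_nonneg hμ (hA0' n)])
      have hsq2l : lam*(2*q*(α*b))^2 = lam*(μ*(A (n+1) - A n))^2 := by
        linear_combination (α^2*b^2)*hq4 + (μ*b^2)*ha2 + (μ^2*(A (n+1)))*hb2 - μ^2*(hkey n)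
      have hsq2 : (2*q*(α*b))^2 = (μ*(A (n+1) - A n))^2 :=
        mul_left_cancel₀ (ne_of_gt hlam) hsq2l
      have hab : 2*q*(α*b) ≤ μ*(A (n+1) - A n) := by
        apply le_of_sq_le _ _ (by positivity)
          (by nlinarith [hAmono n]) hsq2.le
      have hbg : b^2 = 1 + γ^2 := by rw [hb2, hg2]
      have hba : β^2 = b^2 + μ*(A (n+1) - A n) := by rw [hB2, hb2]; ring
      have hag : α^2 = γ^2 + μ*(A (n+1) - A n) := by rw [ha2, hg2]; ring
      obtain ⟨hαgb, hβbg⟩ := invariant_step q b γ β α (μ*(A (n+1) - A n))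
        hq0 hg0 hB0 hap hb1 hbg hba hag hab
      have hih2q := mul_le_mul_of_nonneg_left ih2 hq0
      have hih1q := mul_le_mul_of_nonneg_left ih1 hq0
      constructor
      · rw [pow_succ, pow_succ]
        linarith [hβbg, hih2q]
      · rw [pow_succ, pow_succ]
        linarith [hαgb, hih1q]
  -- elementary inequality on the powers
  have hphi : ∀ r : ℕ, 2*(r:ℝ)*q ≤ (1+q)^r - (1-q)^r ∧ 2 ≤ (1+q)^r + (1-q)^r := by
    intro r
    induction r with
    | zero => norm_num
    | succ n ih =>
      obtain ⟨ih1, ih2⟩ := ih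
      have hd : (0:ℝ) ≤ (1+q)^n - (1-q)^n := by
        have h : (0:ℝ) ≤ 2*(n:ℝ)*q := by positivity
        linarith
      constructor
      · rw [pow_succ, pow_succ]
        push_cast
        linarith [mul_le_mul_of_nonneg_left ih2 hq0]
      · rw [pow_succ, pow_succ]
        linarith [mul_le_mul_of_nonneg_left hd hq0]
  refine ⟨fun _ => ⟨hP1, fun hμp r => ?_⟩, fun _ => hP3⟩
  have hinv := (main2 hμp r).2
  have hphir := hphi r
  have hg2 : Real.sqrt (μ * A r) ^ 2 = μ * A r := Real.sq_sqrt (mul_nonneg hμ (hA0' r))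
  have hg0 := Real.sqrt_nonneg (μ * A r)
  set φ := (1+q)^r - (1-q)^r with hφ
  have hφ0 : 0 ≤ φ := by
    have h : (0:ℝ) ≤ 2*(r:ℝ)*q := by positivity
    linarith [hphir.1]
  have h8 : (φ/2)^2 ≤ μ * A r := by
    have := pow_le_pow_left₀ (by positivity : (0:ℝ) ≤ φ/2) hinv 2
    linarith [this, hg2]
  constructor
  · have e : (1/(4*μ))*φ^2 = ((φ/2)^2)/μ := by
      rw [div_pow]
      rw [div_div]
      rw [one_div, inv_mul_eq_div]
      norm_num
    rw [e, div_le_iff₀ hμp]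
    nlinarith [h8]
  · have h9 : (2*(r:ℝ)*q)^2 ≤ φ^2 := by
      nlinarith [hphir.1, hφ0, mul_nonneg (sub_nonneg.mpr hphir.1) (by positivity : (0:ℝ) ≤ φ + 2*(r:ℝ)*q)]
    have hq4r : 4*lam*q^2*(r:ℝ)^2 = μ*(r:ℝ)^2 := by linear_combination (r:ℝ)^2 * hq4
    have X : (r:ℝ)^2*μ ≤ φ^2*lam := by
      nlinarith [mul_le_mul_of_nonneg_left h9 hlam.le, hq4r]
    have e2 : (1/(4*μ))*φ^2 - (r:ℝ)^2/(4*lam) = (φ^2*lam - (r:ℝ)^2*μ)/(4*μ*lam) := by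
      field_simp
    have hnn : (0:ℝ) ≤ (φ^2*lam - (r:ℝ)^2*μ)/(4*μ*lam) := div_nonneg (by linarith) (by positivity)
    linarith
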